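/- For every real number x with 0 < |x| < π, the series \(\sum_{n\ge 0} B_{2n} (2x)^{2n}/(2n)!\) converges and its sum equals \(x\coth(x)\) (equivalently, \(\coth x = \sum_{n\ge 0} 2 B_{2n} (2x)^{2n-1}/(2n)!\)). -/

import Mathlib

open Real Filter

lemma sinh_euler_prod (x : ℝ) :
    Filter.Tendsto (fun n : ℕ => x * ∏ j ∈ Finset.range n, (1 + x ^ 2 / (π ^ 2 * ((j : ℝ) + 1) ^ 2)))
      Filter.atTop (nhds (Real.sinh x)) := by
  have hπ : (π : ℂ) ≠ 0 := by exact_mod_cast Real.pi_ne_zero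
  have key : (π : ℂ) * (x / π * Complex.I) = x * Complex.I := by
    field_simp
  have h := Complex.tendsto_euler_sin_prod (x / π * Complex.I)
  rw [key, Complex.sin_mul_I] at h
  have h2 := (Complex.continuous_im.tendsto _).comp h
  convert h2 using 1
  · ext n
    simp only [Function.comp_apply, key]
    have hsq : ∀ j ∈ Finset.range n, (1 : ℂ) - (↑x / ↑π * Complex.I) ^ 2 / ((j : ℂ) + 1) ^ 2
        = ((1 + x ^ 2 / (π ^ 2 * ((j:ℝ) + 1) ^ 2) : ℝ) : ℂ) := by
      intro j _
      push_cast
      rw [mul_pow, Complex.I_sq]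
      field_simp
      ring
    rw [Finset.prod_congr rfl hsq, ← Complex.ofReal_prod]
    have : (↑x * Complex.I * ((∏ j ∈ Finset.range n, (1 + x ^ 2 / (π ^ 2 * ((j:ℝ) + 1) ^ 2)) : ℝ) : ℂ))
        = ((x * ∏ j ∈ Finset.range n, (1 + x ^ 2 / (π ^ 2 * ((j:ℝ) + 1) ^ 2)) : ℝ) : ℂ) * Complex.I := by
      push_cast; ring
    rw [this, Complex.mul_I_im, Complex.ofReal_re]
  · rw [Complex.mul_I_im, Complex.sinh_ofReal_re]

lemma hasSum_log_sinh (x : ℝ) (hx : 0 < x) :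
    HasSum (fun n : ℕ => Real.log (1 + x ^ 2 / (π ^ 2 * ((n : ℝ) + 1) ^ 2)))
      (Real.log (Real.sinh x / x)) := by
  have hpos : ∀ j : ℕ, 0 < 1 + x ^ 2 / (π ^ 2 * ((j : ℝ) + 1) ^ 2) := by
    intro j
    have : 0 < π ^ 2 * ((j : ℝ) + 1) ^ 2 := by positivity
    positivity
  have hprod : Filter.Tendsto
      (fun n : ℕ => ∏ j ∈ Finset.range n, (1 + x ^ 2 / (π ^ 2 * ((j : ℝ) + 1) ^ 2)))
      Filter.atTop (nhds (Real.sinh x / x)) := by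
    have h := (sinh_euler_prod x).const_mul (x⁻¹)
    simp only [← mul_assoc, inv_mul_cancel₀ hx.ne', one_mul] at h
    simpa [div_eq_inv_mul] using h
  have hlog : Filter.Tendsto
      (fun n : ℕ => Real.log (∏ j ∈ Finset.range n, (1 + x ^ 2 / (π ^ 2 * ((j : ℝ) + 1) ^ 2))))
      Filter.atTop (nhds (Real.log (Real.sinh x / x))) := by
    have : 0 < Real.sinh x / x := div_pos (Real.sinh_pos_iff.mpr hx) hx
    exact (Real.continuousAt_log this.ne').tendsto.comp hprod
  rw [hasSum_iff_tendsto_nat_of_nonneg (fun n => Real.log_nonneg (by linarith [ (hpos n).le, div_nonneg (sq_nonneg x) (le_of_lt (by positivity : (0:ℝ) < π ^ 2 * ((n : ℝ) + 1) ^ 2))]))]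
  refine hlog.congr fun n => ?_
  rw [Real.log_prod (fun j _ => (hpos j).ne')]

lemma summable_inv_sq_shift : Summable (fun n : ℕ => 1 / ((n : ℝ) + 1) ^ 2) := by
  have h : Summable (fun n : ℕ => 1 / (n : ℝ) ^ 2) := by
    rw [Real.summable_one_div_nat_pow]
    norm_num
  have := (summable_nat_add_iff 1).mpr h
  simpa using this

lemma hasSum_coth_pf (x : ℝ) (hx : 0 < x) :
    HasSum (fun n : ℕ => 2 * x ^ 2 / (x ^ 2 + π ^ 2 * ((n : ℝ) + 1) ^ 2))
      (x * (Real.cosh x / Real.sinh x) - 1) := by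
  have hcpos : ∀ n : ℕ, (0:ℝ) < π ^ 2 * ((n : ℝ) + 1) ^ 2 := fun n => by positivity
  set c : ℕ → ℝ := fun n => π ^ 2 * ((n : ℝ) + 1) ^ 2 with hc
  set g : ℕ → ℝ → ℝ := fun n y => Real.log (1 + y ^ 2 / c n) with hg
  set g' : ℕ → ℝ → ℝ := fun n y => 2 * y / (y ^ 2 + c n) with hg'
  set u : ℕ → ℝ := fun n => 2 * (x + 1) / c n with hu
  have hgpos : ∀ n (y : ℝ), 0 < 1 + y ^ 2 / c n := by
    intro n y
    have := hcpos n
    positivity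
  have key : ∀ (n : ℕ) (y : ℝ), (1 + y ^ 2 / c n)⁻¹ * (2 * y / c n) = 2 * y / (y ^ 2 + c n) := by
    intro n y
    have h1 : c n ≠ 0 := (hcpos n).ne'
    have h2 : y ^ 2 + c n ≠ 0 := by have := hcpos n; positivity
    have h3 : 1 + y ^ 2 / c n = (y ^ 2 + c n) / c n := by field_simp; ring
    rw [h3]
    rw [inv_div, div_mul_div_comm]
    rw [div_eq_div_iff (by exact mul_ne_zero h2 h1) h2]
    ring
  have hderiv : ∀ n (y : ℝ), HasDerivAt (g n) (g' n y) y := by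
    intro n y
    have h1 : HasDerivAt (fun y : ℝ => 1 + y ^ 2 / c n) (2 * y / c n) y := by
      simpa using ((hasDerivAt_pow 2 y).div_const (c n)).const_add 1
    have h2 := (Real.hasDerivAt_log (hgpos n y).ne').comp y h1
    simpa [hg, hg', Function.comp_def, key n y] using h2
  have hsumu : Summable u := by
    have := summable_inv_sq_shift.mul_left (2 * (x + 1) / π ^ 2)
    refine this.congr fun n => ?_
    rw [hu, hc]
    field_simp
  -- derivative bound on the interval
  have hbound : ∀ n (y : ℝ), y ∈ Set.Ioo (0:ℝ) (x + 1) → ‖g' n y‖ ≤ u n := by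
    intro n y hy
    rw [hg', hu, Real.norm_eq_abs]
    have hy0 : 0 < y := hy.1
    have hy1 : y < x + 1 := hy.2
    have h2 : (0:ℝ) < y ^ 2 + c n := by have := hcpos n; positivity
    rw [abs_of_nonneg (by positivity)]
    apply div_le_div₀ (by positivity) (by linarith) (hcpos n)
    exact le_add_of_nonneg_left (sq_nonneg y)
  have hmem : x ∈ Set.Ioo (0:ℝ) (x + 1) := ⟨hx, by linarith⟩
  have hg0 : Summable fun n => g n x := (hasSum_log_sinh x hx).summable
  have hF : HasDerivAt (fun y => ∑' n, g n y) (∑' n, g' n x) x :=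
    hasDerivAt_tsum_of_isPreconnected hsumu isOpen_Ioo (convex_Ioo _ _).isPreconnected
      (fun n y _ => hderiv n y) hbound hmem hg0 hmem
  -- the tsum agrees with log (sinh y / y) on the interval
  have hFeq : ∀ y ∈ Set.Ioo (0:ℝ) (x + 1), (∑' n, g n y) = Real.log (Real.sinh y / y) := by
    intro y hy
    exact (hasSum_log_sinh y hy.1).tsum_eq
  -- derivative of log (sinh y / y)
  have hG : HasDerivAt (fun y : ℝ => Real.log (Real.sinh y / y))
      (Real.cosh x / Real.sinh x - 1 / x) x := by
    have hsx : Real.sinh x ≠ 0 := (Real.sinh_pos_iff.mpr hx).ne'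
    have h1 : HasDerivAt (fun y : ℝ => Real.sinh y / y)
        ((Real.cosh x * x - Real.sinh x * 1) / x ^ 2) x :=
      (Real.hasDerivAt_sinh x).div (hasDerivAt_id x) hx.ne'
    have h2 : Real.sinh x / x ≠ 0 := by positivity
    have h3 := HasDerivAt.log h1 h2
    convert h3 using 1
    field_simp
  -- derivatives agree
  have heq : (∑' n, g' n x) = Real.cosh x / Real.sinh x - 1 / x := by
    have : HasDerivAt (fun y => ∑' n, g n y) (Real.cosh x / Real.sinh x - 1 / x) x := by
      apply hG.congr_of_eventuallyEq
      filter_upwards [isOpen_Ioo.mem_nhds hmem] with y hy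
      exact hFeq y hy
    exact hF.unique this
  have hsum' : Summable fun n => g' n x := by
    apply Summable.of_norm_bounded hsumu
    intro n
    exact hbound n x hmem
  have := hsum'.hasSum
  rw [heq] at this
  have h4 := this.mul_left x
  have h5 : x * (Real.cosh x / Real.sinh x - 1 / x) = x * (Real.cosh x / Real.sinh x) - 1 := by
    field_simp
  rw [h5] at h4
  refine h4.congr_fun fun n => ?_
  rw [hg']
  have h2 : x ^ 2 + c n ≠ 0 := by have := hcpos n; positivity
  field_simp
  ring

lemma hasSum_geom_row (x : ℝ) (hx : 0 < x) (hx' : x < π) (n : ℕ) :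
    HasSum (fun k : ℕ => 2 * (-1 : ℝ) ^ k * (x ^ 2 / (π ^ 2 * ((n : ℝ) + 1) ^ 2)) ^ (k + 1))
      (2 * x ^ 2 / (x ^ 2 + π ^ 2 * ((n : ℝ) + 1) ^ 2)) := by
  set q : ℝ := x ^ 2 / (π ^ 2 * ((n : ℝ) + 1) ^ 2) with hq
  have hc : (0:ℝ) < π ^ 2 * ((n : ℝ) + 1) ^ 2 := by positivity
  have hq0 : 0 < q := by positivity
  have hq1 : q < 1 := by
    rw [hq, div_lt_one hc]
    have h1 : x ^ 2 < π ^ 2 := by nlinarith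
    have h2 : (1:ℝ) ≤ ((n:ℝ) + 1) ^ 2 := by nlinarith [Nat.cast_nonneg (α := ℝ) n]
    nlinarith
  have hgeom : HasSum (fun k : ℕ => (-q) ^ k) (1 - -q)⁻¹ := by
    apply hasSum_geometric_of_norm_lt_one
    rw [norm_neg, Real.norm_eq_abs, abs_of_pos hq0]
    exact hq1
  have h2 := hgeom.mul_left (2 * q)
  have h3 : ∀ k : ℕ, 2 * q * (-q) ^ k = 2 * (-1:ℝ) ^ k * q ^ (k + 1) := by
    intro k
    rw [neg_pow, pow_succ]
    ring
  have h4 := h2.congr_fun fun k => (h3 k).symm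
  suffices e : 2 * x ^ 2 / (x ^ 2 + π ^ 2 * ((n : ℝ) + 1) ^ 2) = 2 * q * (1 - -q)⁻¹ by
    rw [e]; exact h4
  rw [hq]
  have hden : x ^ 2 + π ^ 2 * ((n : ℝ) + 1) ^ 2 ≠ 0 := by positivity
  have e : (1 - -(x ^ 2 / (π ^ 2 * ((n : ℝ) + 1) ^ 2))) =
      (x ^ 2 + π ^ 2 * ((n : ℝ) + 1) ^ 2) / (π ^ 2 * ((n : ℝ) + 1) ^ 2) := by
    field_simp
    ring
  rw [e, inv_div]
  field_simp

lemma hasSum_zeta_col (x : ℝ) (k : ℕ) :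
    HasSum (fun n : ℕ => 2 * (-1 : ℝ) ^ k * (x ^ 2 / (π ^ 2 * ((n : ℝ) + 1) ^ 2)) ^ (k + 1))
      ((bernoulli (2 * (k + 1)) : ℝ) * (2 * x) ^ (2 * (k + 1)) / (Nat.factorial (2 * (k + 1)) : ℝ)) := by
  have hπ : (π : ℝ) ≠ 0 := Real.pi_ne_zero
  have hZ := hasSum_zeta_nat (k := k + 1) (Nat.succ_ne_zero k)
  set Z : ℝ := (-1 : ℝ) ^ (k + 1 + 1) * (2:ℝ) ^ (2 * (k + 1) - 1) * π ^ (2 * (k + 1)) *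
      (bernoulli (2 * (k + 1)) : ℝ) / (Nat.factorial (2 * (k + 1)) : ℝ) with hZdef
  -- shift by one
  have hshift : HasSum (fun n : ℕ => 1 / ((n : ℝ) + 1) ^ (2 * (k + 1))) Z := by
    have h0 : (1:ℝ) / ((0:ℕ) : ℝ) ^ (2 * (k + 1)) = 0 := by
      rw [Nat.cast_zero, zero_pow (by omega : 2 * (k + 1) ≠ 0), div_zero]
    have := (hasSum_nat_add_iff (f := fun n : ℕ => 1 / (n : ℝ) ^ (2 * (k + 1))) 1).mpr
      (by simpa [h0] using hZ)
    refine this.congr_fun fun n => ?_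
    push_cast
    ring_nf
  have hmul := hshift.mul_left (2 * (-1:ℝ) ^ k * (x ^ 2 / π ^ 2) ^ (k + 1))
  have hterm : ∀ n : ℕ, 2 * (-1:ℝ) ^ k * (x ^ 2 / π ^ 2) ^ (k + 1) * (1 / ((n : ℝ) + 1) ^ (2 * (k + 1)))
      = 2 * (-1 : ℝ) ^ k * (x ^ 2 / (π ^ 2 * ((n : ℝ) + 1) ^ 2)) ^ (k + 1) := by
    intro n
    have e1 : x ^ 2 / (π ^ 2 * (((n:ℝ)) + 1) ^ 2) = x ^ 2 / π ^ 2 * (1 / ((n:ℝ) + 1) ^ 2) := by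
      rw [div_mul_div_comm, mul_one]
    rw [e1, mul_pow, div_pow 1, one_pow, ← pow_mul]
    ring
  have hval : 2 * (-1:ℝ) ^ k * (x ^ 2 / π ^ 2) ^ (k + 1) * Z
      = (bernoulli (2 * (k + 1)) : ℝ) * (2 * x) ^ (2 * (k + 1)) / (Nat.factorial (2 * (k + 1)) : ℝ) := by
    rw [hZdef]
    have hsign : ((-1:ℝ)) ^ k * (-1:ℝ) ^ (k + 1 + 1) = 1 := by
      rw [← pow_add]
      exact Even.neg_one_pow ⟨k + 1, by omega⟩
    have hpow2 : (2:ℝ) ^ (2 * (k + 1) - 1) * 2 = 2 ^ (2 * (k + 1)) := by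
      rw [← pow_succ, Nat.sub_add_cancel (show 1 ≤ 2 * (k + 1) by omega)]
    have hxpi : (x ^ 2 / π ^ 2) ^ (k + 1) * π ^ (2 * (k + 1)) = x ^ (2 * (k + 1)) := by
      rw [pow_mul π, pow_mul x, div_pow, div_mul_cancel₀ _ (pow_ne_zero (k + 1) (pow_ne_zero 2 hπ))]
    have step : 2 * (-1:ℝ) ^ k * (x ^ 2 / π ^ 2) ^ (k + 1) *
        ((-1 : ℝ) ^ (k + 1 + 1) * (2:ℝ) ^ (2 * (k + 1) - 1) * π ^ (2 * (k + 1)) *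
          (bernoulli (2 * (k + 1)) : ℝ) / (Nat.factorial (2 * (k + 1)) : ℝ))
        = ((-1:ℝ) ^ k * (-1 : ℝ) ^ (k + 1 + 1)) * ((2:ℝ) ^ (2 * (k + 1) - 1) * 2) *
          ((x ^ 2 / π ^ 2) ^ (k + 1) * π ^ (2 * (k + 1))) *
          (bernoulli (2 * (k + 1)) : ℝ) / (Nat.factorial (2 * (k + 1)) : ℝ) := by
      ring
    rw [step, hsign, hpow2, hxpi, mul_pow 2 x]
    ring
  rw [← hval]
  exact hmul.congr_fun fun n => (hterm n).symm

lemma core_coth (x : ℝ) (hx : 0 < x) (hx' : x < π) :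
    HasSum (fun n : ℕ => (bernoulli (2 * n) : ℝ) * (2 * x) ^ (2 * n) / (Nat.factorial (2 * n) : ℝ))
      (x * (Real.cosh x / Real.sinh x)) := by
  set f : ℕ × ℕ → ℝ :=
    fun p => 2 * (-1 : ℝ) ^ p.2 * (x ^ 2 / (π ^ 2 * ((p.1 : ℝ) + 1) ^ 2)) ^ (p.2 + 1) with hf
  set q : ℕ → ℝ := fun n => x ^ 2 / (π ^ 2 * ((n : ℝ) + 1) ^ 2) with hqdef
  have hq0 : ∀ n, 0 ≤ q n := fun n => by positivity
  have hr : x ^ 2 / π ^ 2 < 1 := by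
    rw [div_lt_one (by positivity)]
    nlinarith
  have hq1 : ∀ n, q n ≤ x ^ 2 / π ^ 2 := by
    intro n
    rw [hqdef]
    apply div_le_div_of_nonneg_left (sq_nonneg x) (by positivity)
    nlinarith [sq_nonneg π, Nat.cast_nonneg (α := ℝ) n,
      mul_nonneg (mul_nonneg (sq_nonneg π) (Nat.cast_nonneg (α := ℝ) n)) (Nat.cast_nonneg (α := ℝ) n),
      mul_nonneg (sq_nonneg π) (Nat.cast_nonneg (α := ℝ) n)]
  have hqlt : ∀ n, q n < 1 := fun n => lt_of_le_of_lt (hq1 n) hr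
  -- summability of the norms
  have hnorm : ∀ p : ℕ × ℕ, ‖f p‖ = 2 * q p.1 ^ (p.2 + 1) := by
    intro p
    rw [hf, Real.norm_eq_abs, abs_mul, abs_mul, abs_pow, abs_pow, abs_neg, abs_one, one_pow,
      mul_one, abs_of_nonneg (hq0 p.1), abs_two]
  have hrownorm : ∀ n, HasSum (fun k => 2 * q n ^ (k + 1)) (2 * q n / (1 - q n)) := by
    intro n
    have h := (hasSum_geometric_of_lt_one (hq0 n) (hqlt n)).mul_left (2 * q n)
    have e : 2 * q n * (1 - q n)⁻¹ = 2 * q n / (1 - q n) := by rw [div_eq_mul_inv]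
    rw [e] at h
    refine h.congr_fun fun k => ?_
    rw [pow_succ]
    ring
  have hsummable : Summable fun p : ℕ × ℕ => ‖f p‖ := by
    apply (summable_prod_of_nonneg (fun p => norm_nonneg (f p))).mpr
    constructor
    · intro n
      refine Summable.congr (hrownorm n).summable fun k => (hnorm (n, k)).symm
    · have hb : Summable fun n : ℕ => (2 * (x ^ 2 / π ^ 2) / (1 - x ^ 2 / π ^ 2)) *
          (1 / ((n : ℝ) + 1) ^ 2) := summable_inv_sq_shift.mul_left _
      apply Summable.of_nonneg_of_le (fun n => tsum_nonneg fun k => norm_nonneg _) _ hb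
      intro n
      have ht : (∑' k, ‖f (n, k)‖) = 2 * q n / (1 - q n) := by
        rw [tsum_congr fun k => hnorm (n, k)]
        exact (hrownorm n).tsum_eq
      rw [ht]
      have h1 : 0 < 1 - x ^ 2 / π ^ 2 := by linarith
      have h2 : 1 - x ^ 2 / π ^ 2 ≤ 1 - q n := by linarith [hq1 n]
      have h3 : 2 * q n / (1 - q n) ≤ 2 * q n / (1 - x ^ 2 / π ^ 2) :=
        div_le_div_of_nonneg_left (by linarith [hq0 n]) h1 h2
      refine h3.trans (le_of_eq ?_)
      have hqsplit : q n = (x ^ 2 / π ^ 2) * (1 / ((n:ℝ) + 1) ^ 2) := by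
        rw [hqdef]
        rw [div_mul_div_comm, mul_one]
      rw [hqsplit]
      ring
  have hfs : Summable f := Summable.of_norm hsummable
  have hL := hfs.hasSum
  set L : ℝ := ∑' p, f p with hLdef
  -- first grouping: rows
  have hrows : HasSum (fun n : ℕ => 2 * x ^ 2 / (x ^ 2 + π ^ 2 * ((n : ℝ) + 1) ^ 2)) L :=
    hL.prod_fiberwise fun n => hasSum_geom_row x hx hx' n
  have hLval : L = x * (Real.cosh x / Real.sinh x) - 1 :=
    hrows.unique (hasSum_coth_pf x hx)
  -- second grouping: columns
  have hswap : HasSum (fun p : ℕ × ℕ => f (p.2, p.1)) L := by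
    have := ((Equiv.prodComm ℕ ℕ).hasSum_iff (f := f) (a := L)).mpr hL
    exact this.congr_fun fun p => rfl
  have hcols : HasSum (fun k : ℕ => (bernoulli (2 * (k + 1)) : ℝ) * (2 * x) ^ (2 * (k + 1)) /
      (Nat.factorial (2 * (k + 1)) : ℝ)) L :=
    hswap.prod_fiberwise fun k => hasSum_zeta_col x k
  rw [hLval] at hcols
  -- add back the n = 0 term
  have := (hasSum_nat_add_iff
    (f := fun n : ℕ => (bernoulli (2 * n) : ℝ) * (2 * x) ^ (2 * n) / (Nat.factorial (2 * n) : ℝ))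
    1).mp (hcols.congr_fun fun k => by norm_num)
  simpa using this

theorem hasSum_bernoulli_coth' (x : ℝ) (hx : 0 < |x|) (hx' : |x| < π) :
    HasSum (fun n : ℕ => (bernoulli (2 * n) : ℝ) * (2 * x) ^ (2 * n) / (Nat.factorial (2 * n) : ℝ))
      (x * (Real.cosh x / Real.sinh x)) := by
  rcases abs_cases x with ⟨h1, h2⟩ | ⟨h1, h2⟩
  · rw [h1] at hx hx'
    exact core_coth x hx hx'
  · rw [h1] at hx hx'
    have h := core_coth (-x) hx hx'
    have hval : (-x) * (Real.cosh (-x) / Real.sinh (-x)) = x * (Real.cosh x / Real.sinh x) := by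
      rw [Real.cosh_neg, Real.sinh_neg, div_neg]
      ring
    rw [hval] at h
    refine h.congr_fun fun n => ?_
    congr 1
    congr 1
    have : (2 * (-x)) = -(2 * x) := by ring
    rw [this, Even.neg_pow ⟨n, by ring⟩]
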